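/- arXiv:1506.03470 — 3 statements merged into one kernel-verified Lean document; each statement's English description precedes it below -/
import Mathlib

section
/- Let n ≥ 1 and x = (x_1,…,x_n) ∈ ℕ^n. Then the number of x-parking functions equals the polynomial P_n(x_1,…,x_n) := ∑_{(α_1,…,α_n) ∈ PF(n)} x_{α_1+1} · x_{α_2+1} ⋯ x_{α_n+1}, where the sum is over all classical parking functions of length n. -/
/-- `α` is an `x`-parking function of length `n`.  Here the vector
`x = (x_1,…,x_n)` is given 0-based, i.e. `x k` is `x_{k+1}`.  The condition used is the
equivalent one: for each `1 ≤ j ≤ n`, at least `j` entries of `α` are `≤ x_1 + ⋯ + x_j − 1`,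
i.e. `< x_1 + ⋯ + x_j`. -/
def IsVPF (n : ℕ) (x : ℕ → ℕ) (α : Fin n → ℕ) : Prop :=
  ∀ j : Fin n, (j : ℕ) + 1 ≤
    (Finset.univ.filter fun i => α i < ∑ k ∈ Finset.range ((j : ℕ) + 1), x k).card

namespace PSaux

/-- Partial sums `S x j = x 0 + ⋯ + x (j-1)`. -/
def S (x : ℕ → ℕ) (j : ℕ) : ℕ := ∑ k ∈ Finset.range j, x k

lemma S_mono (x : ℕ → ℕ) : Monotone (S x) := fun _ _ h =>
  Finset.sum_le_sum_of_subset (Finset.range_subset_range.2 h)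

/-- `decode n x β i` is the index of the block containing `β i`. -/
def decode (n : ℕ) (x : ℕ → ℕ) (β : Fin n → ℕ) (i : Fin n) : ℕ :=
  ((Finset.range n).filter (fun j => S x (j + 1) ≤ β i)).card

lemma decode_le_iff {n : ℕ} {x : ℕ → ℕ} (β : Fin n → ℕ) (i : Fin n) {j : ℕ} (hj : j < n) :
    decode n x β i ≤ j ↔ β i < S x (j + 1) := by
  constructor
  · intro h
    by_contra hc
    push_neg at hc
    have hsub : Finset.range (j + 1) ⊆
        (Finset.range n).filter (fun j' => S x (j' + 1) ≤ β i) := by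
      intro j' hj'
      simp only [Finset.mem_range] at hj'
      simp only [Finset.mem_filter, Finset.mem_range]
      exact ⟨lt_of_lt_of_le hj' hj, le_trans (S_mono x (by omega)) hc⟩
    have := Finset.card_le_card hsub
    simp only [Finset.card_range] at this
    unfold decode at h
    omega
  · intro h
    have hsub : (Finset.range n).filter (fun j' => S x (j' + 1) ≤ β i) ⊆ Finset.range j := by
      intro j' hj'
      simp only [Finset.mem_filter, Finset.mem_range] at hj' ⊢
      by_contra hc
      push_neg at hc
      exact absurd (le_trans (S_mono x (by omega)) hj'.2) (not_le.2 h)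
    have := Finset.card_le_card hsub
    simpa [decode, Finset.card_range] using this

lemma isVPF_iff {n : ℕ} {x : ℕ → ℕ} (β : Fin n → ℕ) :
    IsVPF n x β ↔ IsVPF n (fun _ => 1) (decode n x β) := by
  unfold IsVPF
  apply forall_congr'
  intro j
  have hfilter : (Finset.univ.filter fun i => β i < ∑ k ∈ Finset.range ((j : ℕ) + 1), x k)
      = (Finset.univ.filter fun i =>
          decode n x β i < ∑ k ∈ Finset.range ((j : ℕ) + 1), (fun _ => (1 : ℕ)) k) := by
    apply Finset.filter_congr
    intro i _
    simp only [Finset.sum_const, Finset.card_range, smul_eq_mul, mul_one]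
    rw [show (∑ k ∈ Finset.range ((j : ℕ) + 1), x k) = S x ((j : ℕ) + 1) from rfl,
      ← decode_le_iff β i j.isLt]
    omega
  rw [hfilter]

instance (n : ℕ) (x : ℕ → ℕ) : DecidablePred (IsVPF n x) := fun α => by
  unfold IsVPF; infer_instance

/-- The finset of `x`-parking functions. -/
def Bset (n : ℕ) (x : ℕ → ℕ) : Finset (Fin n → ℕ) :=
  (Fintype.piFinset fun _ => Finset.range (S x n)).filter (IsVPF n x)

lemma isVPF_lt {n : ℕ} {x : ℕ → ℕ} (hn : 1 ≤ n) {β : Fin n → ℕ} (h : IsVPF n x β)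
    (i : Fin n) : β i < S x n := by
  have hj := h ⟨n - 1, by omega⟩
  simp only at hj
  have hcard : (Finset.univ.filter fun i =>
      β i < ∑ k ∈ Finset.range ((n - 1) + 1), x k) = Finset.univ := by
    apply Finset.eq_univ_of_card
    have : (Finset.univ.filter fun i =>
        β i < ∑ k ∈ Finset.range ((n - 1) + 1), x k).card ≤ Fintype.card (Fin n) :=
      Finset.card_filter_le _ _
    simp only [Fintype.card_fin] at this ⊢
    omega
  have hi : i ∈ (Finset.univ.filter fun i =>
      β i < ∑ k ∈ Finset.range ((n - 1) + 1), x k) := by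
    rw [hcard]; exact Finset.mem_univ i
  simp only [Finset.mem_filter] at hi
  have : (n - 1) + 1 = n := by omega
  rw [this] at hi
  exact hi.2

lemma mem_Bset_iff {n : ℕ} {x : ℕ → ℕ} (hn : 1 ≤ n) (β : Fin n → ℕ) :
    β ∈ Bset n x ↔ IsVPF n x β := by
  simp only [Bset, Finset.mem_filter, Fintype.mem_piFinset, Finset.mem_range]
  exact ⟨fun h => h.2, fun h => ⟨fun i => isVPF_lt hn h i, h⟩⟩

/-- The finset of classical parking functions. -/
def Aset (n : ℕ) : Finset (Fin n → ℕ) :=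
  (Fintype.piFinset fun _ => Finset.range n).filter (IsVPF n (fun _ => 1))

lemma mem_Aset_iff {n : ℕ} (hn : 1 ≤ n) (α : Fin n → ℕ) :
    α ∈ Aset n ↔ IsVPF n (fun _ => 1) α := by
  simp only [Aset, Finset.mem_filter, Fintype.mem_piFinset, Finset.mem_range]
  refine ⟨fun h => h.2, fun h => ⟨fun i => ?_, h⟩⟩
  have := isVPF_lt hn h i
  simpa [S] using this

end PSaux

open PSaux in
/-- Pitman–Stanley: the number of `x`-parking functions equals
`∑_{α ∈ PF(n)} x_{α_1+1} ⋯ x_{α_n+1}`, the sum over classical parking functions of length `n`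
(which are exactly the `(1,1,…,1)`-parking functions). -/
theorem stmt0 (n : ℕ) (hn : 1 ≤ n) (x : ℕ → ℕ) :
    Set.ncard {α : Fin n → ℕ | IsVPF n x α} =
      ∑ᶠ α ∈ {α : Fin n → ℕ | IsVPF n (fun _ => 1) α}, ∏ i : Fin n, x (α i) := by
  classical
  have hB : {α : Fin n → ℕ | IsVPF n x α} = ↑(Bset n x) := by
    ext β; simp [mem_Bset_iff hn]
  have hA : {α : Fin n → ℕ | IsVPF n (fun _ => 1) α} = ↑(Aset n) := by
    ext α; simp [mem_Aset_iff hn]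
  rw [hB, hA, Set.ncard_coe_finset, finsum_mem_coe_finset]
  have hmap : ∀ β ∈ Bset n x, decode n x β ∈ Aset n := by
    intro β hβ
    rw [mem_Bset_iff hn] at hβ
    rw [mem_Aset_iff hn]
    exact (isVPF_iff β).1 hβ
  rw [Finset.card_eq_sum_card_fiberwise hmap]
  apply Finset.sum_congr rfl
  intro α hα
  have hαlt : ∀ i, α i < n := by
    intro i
    have := (mem_Aset_iff hn α).1 hα
    have h2 := isVPF_lt hn this i
    simpa [S] using h2
  have hfib : (Bset n x).filter (fun β => decode n x β = α)
      = Fintype.piFinset (fun i => Finset.Ico (S x (α i)) (S x (α i) + x (α i))) := by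
    ext β
    simp only [Finset.mem_filter, Fintype.mem_piFinset, Finset.mem_Ico]
    constructor
    · rintro ⟨hβ, hdec⟩
      intro i
      have hupper : β i < S x (α i + 1) := by
        rw [← decode_le_iff β i (hαlt i), hdec]
      have hlower : S x (α i) ≤ β i := by
        rcases Nat.eq_zero_or_pos (α i) with h0 | h0
        · simp [h0, S]
        · by_contra hc
          push_neg at hc
          have hle : decode n x β i ≤ α i - 1 := by
            rw [decode_le_iff β i (by have := hαlt i; omega)]
            have he : (α i - 1) + 1 = α i := by omega
            rw [he]; exact hc
          rw [hdec] at hle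
          omega
      constructor
      · exact hlower
      · have : S x (α i + 1) = S x (α i) + x (α i) := Finset.sum_range_succ x (α i)
        omega
    · intro h
      have hkey : ∀ i, decode n x β i = α i := by
        intro i
        obtain ⟨hi1, hi2⟩ := h i
        have hS : S x (α i + 1) = S x (α i) + x (α i) := Finset.sum_range_succ x (α i)
        have hupper : decode n x β i ≤ α i := by
          rw [decode_le_iff β i (hαlt i)]
          omega
        rcases Nat.eq_zero_or_pos (α i) with h0 | h0
        · omega
        · have hlower : ¬ decode n x β i ≤ α i - 1 := by
            rw [decode_le_iff β i (by have := hαlt i; omega)]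
            have he : (α i - 1) + 1 = α i := by omega
            rw [he]
            omega
          omega
      have hVPF : IsVPF n x β := by
        rw [isVPF_iff β, funext hkey]
        exact (mem_Aset_iff hn α).1 hα
      exact ⟨(mem_Bset_iff hn β).2 hVPF, funext hkey⟩
  rw [hfib, Fintype.card_piFinset]
  apply Finset.prod_congr rfl
  intro i _
  rw [Nat.card_Ico]
  omega
end

section
/- Let n ≥ 1 and x = (x_1,…,x_n) ∈ ℕ^n. Then the number of x-parking functions equals ∑_{(γ_1,…,γ_n) ∈ Γ(n)} (n! / (γ_1! γ_2! ⋯ γ_n!)) · x_1^{γ_1} x_2^{γ_2} ⋯ x_n^{γ_n}. -/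
/-- `Γ(n)`: sequences `(γ_1,…,γ_n) ∈ ℕ^n` with `γ_1+⋯+γ_j ≥ j` for all `j` and total sum `n`
(the condition for `j = n` follows from the total-sum condition, so this agrees with the
definition requiring the inequality only for `1 ≤ j ≤ n−1`). -/
def GammaSet (n : ℕ) : Set (Fin n → ℕ) :=
  {γ | (∀ j : Fin n, (j : ℕ) + 1 ≤ ∑ k ∈ Finset.Iic j, γ k) ∧ (∑ k, γ k) = n}

/-! ### Auxiliary definitions and lemmas -/

/-- Partial sums of `x`. -/
def Ssum (x : ℕ → ℕ) (m : ℕ) : ℕ := ∑ k ∈ Finset.range m, x k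

lemma Ssum_mono (x : ℕ → ℕ) {a b : ℕ} (h : a ≤ b) : Ssum x a ≤ Ssum x b :=
  Finset.sum_le_sum_of_subset (Finset.range_subset_range.2 h)

lemma Ssum_succ (x : ℕ → ℕ) (m : ℕ) : Ssum x (m + 1) = Ssum x m + x m :=
  Finset.sum_range_succ x m

/-- `cnt n x α i` is the number of entries of `α` in the `i`-th block `[S i, S (i+1))`. -/
def cnt (n : ℕ) (x : ℕ → ℕ) (α : Fin n → ℕ) : Fin n → ℕ := fun i =>
  (Finset.univ.filter fun j => Ssum x i ≤ α j ∧ α j < Ssum x ((i : ℕ) + 1)).card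

lemma partial_sum (n : ℕ) (x : ℕ → ℕ) (α : Fin n → ℕ) :
    ∀ m, m ≤ n → ∑ k ∈ Finset.univ.filter (fun k : Fin n => (k : ℕ) < m), cnt n x α k
      = (Finset.univ.filter fun j => α j < Ssum x m).card := by
  intro m
  induction m with
  | zero => intro _; simp [Ssum]
  | succ m ih =>
    intro hm
    have hmn : m < n := hm
    have hs : Ssum x m ≤ Ssum x (m + 1) := Ssum_mono x (Nat.le_succ m)
    have hre : (Finset.univ.filter fun j : Fin n => α j < Ssum x (m + 1)) =
        (Finset.univ.filter fun j => α j < Ssum x m) ∪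
        (Finset.univ.filter fun j => Ssum x m ≤ α j ∧ α j < Ssum x (m + 1)) := by
      rw [← Finset.filter_or]
      apply Finset.filter_congr
      intro j _
      constructor
      · intro h; omega
      · intro h; omega
    have hdisj : Disjoint (Finset.univ.filter fun j : Fin n => α j < Ssum x m)
        (Finset.univ.filter fun j => Ssum x m ≤ α j ∧ α j < Ssum x (m + 1)) := by
      rw [Finset.disjoint_left]
      intro a ha hb
      simp only [Finset.mem_filter] at ha hb
      omega
    have hfl : (Finset.univ.filter fun k : Fin n => (k : ℕ) < m + 1) =
        insert (⟨m, hmn⟩ : Fin n) (Finset.univ.filter fun k : Fin n => (k : ℕ) < m) := by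
      ext k
      simp [Fin.ext_iff]
      omega
    rw [hre, Finset.card_union_of_disjoint hdisj, ← ih (le_of_lt hmn), hfl,
      Finset.sum_insert (by simp)]
    simp only [cnt]
    ring

lemma Iic_sum (n : ℕ) (x : ℕ → ℕ) (α : Fin n → ℕ) (j : Fin n) :
    ∑ k ∈ Finset.Iic j, cnt n x α k
      = (Finset.univ.filter fun i => α i < Ssum x ((j : ℕ) + 1)).card := by
  rw [← partial_sum n x α ((j : ℕ) + 1) j.isLt]
  congr 1
  ext k
  simp only [Finset.mem_Iic, Finset.mem_filter, Finset.mem_univ, true_and, Fin.le_def]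
  omega

lemma sum_univ_cnt (n : ℕ) (x : ℕ → ℕ) (α : Fin n → ℕ) :
    ∑ k, cnt n x α k = (Finset.univ.filter fun i => α i < Ssum x n).card := by
  rw [← partial_sum n x α n le_rfl]
  congr 1
  ext k
  simp [k.isLt]

lemma vpf_iff (n : ℕ) (x : ℕ → ℕ) (hn : 1 ≤ n) (α : Fin n → ℕ) :
    IsVPF n x α ↔ cnt n x α ∈ GammaSet n := by
  constructor
  · intro h
    constructor
    · intro j
      rw [Iic_sum]
      exact h j
    · have h1 : n ≤ (Finset.univ.filter fun i => α i < Ssum x n).card := by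
        have := h ⟨n - 1, by omega⟩
        simp only [Fin.val_mk, Nat.sub_add_cancel hn] at this
        convert this using 3
        rfl
      rw [sum_univ_cnt n x α]
      have h2 : (Finset.univ.filter fun i => α i < Ssum x n).card ≤ n := by
        calc _ ≤ (Finset.univ : Finset (Fin n)).card :=
              Finset.card_le_card (Finset.filter_subset _ _)
        _ = n := by simp
      omega
  · intro ⟨h1, _⟩
    intro j
    have := h1 j
    rw [Iic_sum] at this
    exact this

/-- The block index of a value `v`: the largest `i ≤ n - 1` with `S i ≤ v`. -/
def blk (n : ℕ) (x : ℕ → ℕ) (v : ℕ) : ℕ := Nat.findGreatest (fun i => Ssum x i ≤ v) (n - 1)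

lemma blk_le' (n : ℕ) (x : ℕ → ℕ) (v : ℕ) : blk n x v ≤ n - 1 := Nat.findGreatest_le (n - 1)

lemma blk_lt (n : ℕ) (hn : 1 ≤ n) (x : ℕ → ℕ) (v : ℕ) : blk n x v < n :=
  lt_of_le_of_lt (Nat.findGreatest_le (n - 1)) (by omega)

lemma blk_le_self (n : ℕ) (x : ℕ → ℕ) (v : ℕ) : Ssum x (blk n x v) ≤ v :=
  Nat.findGreatest_spec (P := fun i => Ssum x i ≤ v) (Nat.zero_le _) (by simp [Ssum])

lemma blk_lt_succ (n : ℕ) (hn : 1 ≤ n) (x : ℕ → ℕ) {v : ℕ} (hv : v < Ssum x n) :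
    v < Ssum x (blk n x v + 1) := by
  by_cases h : blk n x v + 1 ≤ n - 1
  · by_contra hc
    push_neg at hc
    exact Nat.findGreatest_is_greatest (Nat.lt_succ_self _) h hc
  · have : blk n x v + 1 = n ∨ n ≤ blk n x v := by
      have := blk_le' n x v
      omega
    rcases this with h' | h'
    · rwa [h']
    · exact absurd (blk_lt n hn x v) (by omega)

lemma blk_unique (n : ℕ) (hn : 1 ≤ n) (x : ℕ → ℕ) {v i : ℕ} (hi : i < n)
    (h1 : Ssum x i ≤ v) (h2 : v < Ssum x (i + 1)) : blk n x v = i := by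
  have hv : v < Ssum x n := lt_of_lt_of_le h2 (Ssum_mono x (by omega))
  have hb1 := blk_le_self n x v
  have hb2 := blk_lt_succ n hn x hv
  rcases lt_trichotomy (blk n x v) i with h | h | h
  · have : Ssum x (blk n x v + 1) ≤ Ssum x i := Ssum_mono x (by omega)
    omega
  · exact h
  · have : Ssum x (i + 1) ≤ Ssum x (blk n x v) := Ssum_mono x (by omega)
    omega

/-- The block function of `α`. -/
def bfun (n : ℕ) (hn : 1 ≤ n) (x : ℕ → ℕ) (α : Fin n → ℕ) : Fin n → Fin n :=
  fun j => ⟨blk n x (α j), blk_lt n hn x (α j)⟩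

/-- The fiber of `Sigma.fst` over `i`. -/
def sigmaFstFiber {n : ℕ} (F : Fin n → Type*) (i : Fin n) : {p : Σ k, F k // p.1 = i} ≃ F i where
  toFun p := p.2 ▸ p.1.2
  invFun v := ⟨⟨i, v⟩, rfl⟩
  left_inv := by rintro ⟨⟨k, v⟩, rfl⟩; rfl
  right_inv := by intro v; rfl

lemma exists_b0 (n : ℕ) (γ : Fin n → ℕ) (hγ : ∑ i, γ i = n) :
    ∃ b : Fin n → Fin n, ∀ i, (Finset.univ.filter fun j => b j = i).card = γ i := by
  have hcard : Fintype.card (Σ i : Fin n, Fin (γ i)) = Fintype.card (Fin n) := by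
    simp [hγ]
  let e : (Σ i : Fin n, Fin (γ i)) ≃ Fin n := Fintype.equivOfCardEq hcard
  refine ⟨fun j => (e.symm j).1, fun i => ?_⟩
  rw [← Fintype.card_subtype]
  have e1 : {j // (e.symm j).1 = i} ≃ {p : Σ k, Fin (γ k) // p.1 = i} :=
    Equiv.subtypeEquiv e.symm (fun _ => Iff.rfl)
  rw [Fintype.card_congr (e1.trans (sigmaFstFiber _ i))]
  simp

lemma comp_perm_fiber {n : ℕ} (b : Fin n → Fin n) (g : Equiv.Perm (Fin n)) (i : Fin n) :
    (Finset.univ.filter fun j => b (g j) = i).card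
      = (Finset.univ.filter fun j => b j = i).card := by
  apply Finset.card_bij (fun j _ => g j)
  · intro a ha; simp only [Finset.mem_filter, Finset.mem_univ, true_and] at *; exact ha
  · intro a _ a' _ h; exact g.injective h
  · intro c hc
    refine ⟨g.symm c, ?_, by simp⟩
    simp only [Finset.mem_filter, Finset.mem_univ, true_and] at *
    simpa using hc

lemma exists_perm {n : ℕ} (b₀ b : Fin n → Fin n)
    (h : ∀ i, (Finset.univ.filter fun j => b j = i).card
      = (Finset.univ.filter fun j => b₀ j = i).card) :
    ∃ g : Equiv.Perm (Fin n), b₀ ∘ g = b := by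
  have eqv : ∀ i, {j // b j = i} ≃ {j // b₀ j = i} := fun i =>
    Fintype.equivOfCardEq (by rw [Fintype.card_subtype, Fintype.card_subtype]; exact h i)
  refine ⟨(Equiv.sigmaFiberEquiv b).symm.trans
    ((Equiv.sigmaCongrRight eqv).trans (Equiv.sigmaFiberEquiv b₀)), ?_⟩
  funext j
  have h2 := (eqv (b j) ⟨j, rfl⟩).2
  simpa [Equiv.sigmaFiberEquiv, Equiv.sigmaCongrRight] using h2

/-- The number of maps `Fin n → Fin n` with fiber cardinalities `γ` is the
multinomial coefficient. -/
lemma card_B_mul (n : ℕ) (γ : Fin n → ℕ) (hγ : ∑ i, γ i = n) :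
    (Finset.univ.filter fun b : Fin n → Fin n =>
        ∀ i, (Finset.univ.filter fun j => b j = i).card = γ i).card
      * ∏ i, Nat.factorial (γ i) = Nat.factorial n := by
  classical
  obtain ⟨b₀, hb₀⟩ := exists_b0 n γ hγ
  set B := Finset.univ.filter fun b : Fin n → Fin n =>
    ∀ i, (Finset.univ.filter fun j => b j = i).card = γ i with hB
  have hmap : ∀ g : Equiv.Perm (Fin n), g ∈ (Finset.univ : Finset (Equiv.Perm (Fin n))) →
      (b₀ ∘ g) ∈ B := by
    intro g _
    simp only [hB, Finset.mem_filter, Finset.mem_univ, true_and]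
    intro i
    have heq : (Finset.univ.filter fun j => (b₀ ∘ g) j = i)
        = (Finset.univ.filter fun j => b₀ (g j) = i) :=
      Finset.filter_congr (fun j _ => Iff.rfl)
    rw [heq, comp_perm_fiber b₀ g i]
    exact hb₀ i
  have key := Finset.card_eq_sum_card_fiberwise hmap
  have huniv : (Finset.univ : Finset (Equiv.Perm (Fin n))).card = Nat.factorial n := by
    simp [Fintype.card_perm]
  have hfib : ∀ b ∈ B, (Finset.univ.filter fun g : Equiv.Perm (Fin n) => b₀ ∘ g = b).card
      = ∏ i, Nat.factorial (γ i) := by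
    intro b hb
    simp only [hB, Finset.mem_filter, Finset.mem_univ, true_and] at hb
    obtain ⟨g₁, hg₁⟩ := exists_perm b₀ b (fun i => by rw [hb i, hb₀ i])
    have e2 : {g : Equiv.Perm (Fin n) // b₀ ∘ g = b} ≃ {g : Equiv.Perm (Fin n) // b₀ ∘ g = b₀} := by
      refine Equiv.subtypeEquiv (Equiv.mulRight g₁⁻¹) (fun g => ?_)
      constructor
      · intro hg
        funext j
        have h1 : b₀ (g (g₁⁻¹ j)) = b (g₁⁻¹ j) := congrFun hg (g₁⁻¹ j)
        have h2 : b (g₁⁻¹ j) = b₀ (g₁ (g₁⁻¹ j)) := (congrFun hg₁ (g₁⁻¹ j)).symm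
        simpa [Equiv.Perm.mul_apply] using h1.trans (by simpa using h2)
      · intro hg
        funext j
        have h1 : b₀ (g (g₁⁻¹ (g₁ j))) = b₀ (g₁ j) := congrFun hg (g₁ j)
        have h2 : b₀ (g₁ j) = b j := congrFun hg₁ j
        simpa using h1.trans h2
    have e3 : Fintype.card {g : Equiv.Perm (Fin n) // b₀ ∘ g = b₀}
        = ∏ i, Nat.factorial (γ i) := by
      rw [DomMulAct.stabilizer_card b₀]
      exact Finset.prod_congr rfl fun i _ => by rw [Fintype.card_subtype, hb₀ i]
    rw [← Fintype.card_subtype]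
    rw [Fintype.card_congr e2, e3]
  rw [Finset.sum_congr rfl hfib] at key
  rw [Finset.sum_const, smul_eq_mul] at key
  rw [← huniv, key]

lemma mem_A_of_cnt (n : ℕ) (x : ℕ → ℕ) (hn : 1 ≤ n) (α : Fin n → ℕ)
    (h : ∑ k, cnt n x α k = n) : ∀ j, α j < Ssum x n := by
  have h1 := sum_univ_cnt n x α
  have h2 : (Finset.univ.filter fun i => α i < Ssum x n) = Finset.univ := by
    apply Finset.eq_univ_of_card
    rw [← h1, h]
    simp
  intro j
  have := Finset.mem_filter.mp (h2 ▸ Finset.mem_univ j)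
  exact this.2

lemma bfun_fiber (n : ℕ) (x : ℕ → ℕ) (hn : 1 ≤ n) (α : Fin n → ℕ)
    (hα : ∀ j, α j < Ssum x n) (i : Fin n) :
    (Finset.univ.filter fun j => bfun n hn x α j = i)
      = (Finset.univ.filter fun j => Ssum x i ≤ α j ∧ α j < Ssum x ((i : ℕ) + 1)) := by
  ext j
  simp only [Finset.mem_filter, Finset.mem_univ, true_and, bfun, Fin.ext_iff]
  constructor
  · rintro h
    have h1 := blk_le_self n x (α j)
    have h2 : α j < Ssum x (blk n x (α j) + 1) := blk_lt_succ n hn x (hα j)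
    rw [h] at h1 h2
    exact ⟨h1, h2⟩
  · rintro ⟨h1, h2⟩
    exact blk_unique n hn x i.isLt h1 h2

/-- The finset of all candidate parking functions. -/
noncomputable def Afin (n : ℕ) (x : ℕ → ℕ) : Finset (Fin n → ℕ) :=
  Fintype.piFinset (fun _ : Fin n => Finset.range (Ssum x n))

lemma fiber_count (n : ℕ) (x : ℕ → ℕ) (hn : 1 ≤ n) (γ : Fin n → ℕ) (hγ : ∑ i, γ i = n) :
    ((Afin n x).filter fun α => cnt n x α = γ).card
      = (Nat.factorial n / ∏ i, Nat.factorial (γ i)) * ∏ i : Fin n, x (i : ℕ) ^ γ i := by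
  classical
  set B := Finset.univ.filter fun b : Fin n → Fin n =>
    ∀ i, (Finset.univ.filter fun j => b j = i).card = γ i with hB
  have hmaps : ∀ α ∈ (Afin n x).filter fun α => cnt n x α = γ, bfun n hn x α ∈ B := by
    intro α hα
    simp only [Finset.mem_filter] at hα
    simp only [hB, Finset.mem_filter, Finset.mem_univ, true_and]
    intro i
    rw [bfun_fiber n x hn α (fun j => Finset.mem_range.mp ((Fintype.mem_piFinset.mp hα.1) j)) i]
    exact congrFun hα.2 i
  have key := Finset.card_eq_sum_card_fiberwise hmaps
  have hfib : ∀ b ∈ B,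
      (((Afin n x).filter fun α => cnt n x α = γ).filter fun α => bfun n hn x α = b).card
        = ∏ i : Fin n, x (i : ℕ) ^ γ i := by
    intro b hb
    simp only [hB, Finset.mem_filter, Finset.mem_univ, true_and] at hb
    have hpi : (((Afin n x).filter fun α => cnt n x α = γ).filter fun α => bfun n hn x α = b)
        = Fintype.piFinset (fun j => Finset.Ico (Ssum x (b j)) (Ssum x ((b j : ℕ) + 1))) := by
      ext α
      simp only [Finset.filter_filter, Finset.mem_filter, Fintype.mem_piFinset, Finset.mem_Ico,
        Afin, Finset.mem_range]
      constructor
      · rintro ⟨hA, hcnt, hbf⟩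
        intro j
        have : bfun n hn x α j = b j := congrFun hbf j
        have hv : (b j : ℕ) = blk n x (α j) := by
          rw [← this]; rfl
        constructor
        · rw [hv]; exact blk_le_self n x (α j)
        · rw [hv]; exact blk_lt_succ n hn x (hA j)
      · intro h
        have hα : ∀ j, α j < Ssum x n := by
          intro j
          exact lt_of_lt_of_le (h j).2 (Ssum_mono x (b j).isLt)
        have hbf : bfun n hn x α = b := by
          funext j
          exact Fin.ext (blk_unique n hn x (b j).isLt (h j).1 (h j).2)
        refine ⟨hα, ?_, hbf⟩
        funext i
        show (Finset.univ.filter fun j => Ssum x i ≤ α j ∧ α j < Ssum x ((i : ℕ) + 1)).card = γ i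
        rw [← bfun_fiber n x hn α hα i, ← hb i]
        congr 1
        ext j
        simp only [Finset.mem_filter, Finset.mem_univ, true_and]
        rw [hbf]
    rw [hpi, Fintype.card_piFinset]
    have h1 : ∀ j : Fin n, (Finset.Ico (Ssum x (b j)) (Ssum x ((b j : ℕ) + 1))).card
        = x ((b j : ℕ)) := by
      intro j
      rw [Nat.card_Ico, Ssum_succ]
      omega
    rw [Finset.prod_congr rfl (fun j _ => h1 j)]
    rw [← Finset.prod_fiberwise_of_maps_to (g := b) (t := Finset.univ) (fun j _ => Finset.mem_univ _)
      (fun j => x ((b j : ℕ)))]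
    apply Finset.prod_congr rfl
    intro i _
    calc ∏ j ∈ Finset.univ.filter fun j => b j = i, x ((b j : ℕ))
        = ∏ j ∈ Finset.univ.filter fun j => b j = i, x ((i : ℕ)) := by
          apply Finset.prod_congr rfl
          intro j hj
          simp only [Finset.mem_filter] at hj
          rw [hj.2]
      _ = x ((i : ℕ)) ^ γ i := by rw [Finset.prod_const, hb i]
  rw [Finset.sum_congr rfl hfib, Finset.sum_const, smul_eq_mul] at key
  rw [key]
  congr 1
  have hBcard := card_B_mul n γ hγ
  have hpos : 0 < ∏ i, Nat.factorial (γ i) := Finset.prod_pos (fun i _ => Nat.factorial_pos _)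
  rw [← hB] at hBcard
  exact (Nat.div_eq_of_eq_mul_left hpos hBcard.symm).symm

/-- Pitman–Stanley: `#PF(x) = ∑_{γ ∈ Γ(n)} (n!/(γ_1!⋯γ_n!)) x_1^{γ_1} ⋯ x_n^{γ_n}`. -/
theorem stmt1 (n : ℕ) (hn : 1 ≤ n) (x : ℕ → ℕ) :
    Set.ncard {α : Fin n → ℕ | IsVPF n x α} =
      ∑ᶠ γ ∈ GammaSet n, (Nat.factorial n / ∏ i : Fin n, Nat.factorial (γ i)) * ∏ i : Fin n, x (i : ℕ) ^ γ i := by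
  classical
  have hGsub : GammaSet n ⊆ ↑(Fintype.piFinset fun _ : Fin n => Finset.range (n + 1)) := by
    intro γ hγ
    simp only [Finset.mem_coe, Fintype.mem_piFinset, Finset.mem_range]
    intro i
    have : γ i ≤ ∑ k, γ k :=
      Finset.single_le_sum (fun k _ => Nat.zero_le (γ k)) (Finset.mem_univ i)
    rw [hγ.2] at this
    omega
  have hGfin : (GammaSet n).Finite :=
    Set.Finite.subset (Finset.finite_toSet _) hGsub
  rw [finsum_mem_eq_finite_toFinset_sum _ hGfin]
  have hset : {α : Fin n → ℕ | IsVPF n x α}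
      = ↑((Afin n x).filter fun α => IsVPF n x α) := by
    ext α
    simp only [Set.mem_setOf_eq, Finset.coe_filter, Afin, Fintype.mem_piFinset,
      Finset.mem_range]
    constructor
    · intro h
      have hg := (vpf_iff n x hn α).mp h
      exact ⟨mem_A_of_cnt n x hn α hg.2, h⟩
    · exact fun h => h.2
  rw [hset, Set.ncard_coe_finset]
  have hmaps : ∀ α ∈ (Afin n x).filter (fun α => IsVPF n x α),
      cnt n x α ∈ hGfin.toFinset := by
    intro α hα
    rw [Set.Finite.mem_toFinset]
    exact (vpf_iff n x hn α).mp (Finset.mem_filter.mp hα).2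
  rw [Finset.card_eq_sum_card_fiberwise hmaps]
  apply Finset.sum_congr rfl
  intro γ hγ
  rw [Set.Finite.mem_toFinset] at hγ
  have hff : (((Afin n x).filter fun α => IsVPF n x α).filter fun α => cnt n x α = γ)
      = (Afin n x).filter fun α => cnt n x α = γ := by
    rw [Finset.filter_filter]
    apply Finset.filter_congr
    intro α _
    constructor
    · exact And.right
    · intro h
      exact ⟨(vpf_iff n x hn α).mpr (h ▸ hγ), h⟩
  rw [hff, fiber_count n x hn γ hγ.2]
end

section
/- Let n ≥ 1 and x = (x_1,…,x_n) ∈ ℕ^n. Then the number of x-parking functions equals n! · ∑_{T ∈ RPT(n+1)} ∏_{i=1}^{n} x_i^{outdeg_T(i−1)} / (outdeg_T(i−1)!) (an equality of rational numbers; the right-hand side is in fact an integer). -/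
/-- A rooted plane tree on `n+1` vertices `{0,1,…,n}` with root `0`, encoded by its parent
function. -/
structure PlaneTree (n : ℕ) where
  par : Fin (n + 1) → Fin (n + 1)
  par_zero : par 0 = 0
  par_lt : ∀ v : Fin (n + 1), v ≠ 0 → par v < v
  plane : ∀ i j k : Fin (n + 1), 0 < i → i < j → j < k →
    (∃ m, par^[m] k = i) → (∃ m, par^[m] j = i)

/-- The number of children of vertex `i` in `T`. -/
def outdeg {n : ℕ} (T : PlaneTree n) (i : Fin (n + 1)) : ℕ :=
  (Finset.univ.filter fun j => j ≠ 0 ∧ T.par j = i).card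

namespace VPFaux


def S (x : ℕ → ℕ) (m : ℕ) : ℕ := ∑ k ∈ Finset.range m, x k

lemma S_mono (x : ℕ → ℕ) : Monotone (S x) := fun _ _ h =>
  Finset.sum_le_sum_of_subset (Finset.range_subset_range.2 h)

lemma S_succ (x : ℕ → ℕ) (m : ℕ) : S x (m + 1) = S x m + x m :=
  Finset.sum_range_succ x m

def IsVPF' (n : ℕ) (x : ℕ → ℕ) (α : Fin n → ℕ) : Prop :=
  ∀ j : Fin n, (j : ℕ) + 1 ≤
    (Finset.univ.filter fun i => α i < S x ((j : ℕ) + 1)).card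

instance (n x) : DecidablePred (IsVPF' n x) := fun _ =>
  Fintype.decidableForallFintype

def InL (n : ℕ) (ℓ : Fin n → Fin n) : Prop :=
  ∀ j : Fin n, (j : ℕ) + 1 ≤ (Finset.univ.filter fun i => ℓ i ≤ j).card

instance (n) : DecidablePred (InL n) := fun _ => Fintype.decidableForallFintype

variable {n : ℕ} {x : ℕ → ℕ}

def lev (n : ℕ) (x : ℕ → ℕ) (α : Fin n → ℕ) (i : Fin n) : Fin n :=
  if h : ∃ j, j < n ∧ α i < S x (j + 1) then ⟨Nat.find h, (Nat.find_spec h).1⟩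
  else ⟨0, i.pos⟩

lemma lev_spec {α : Fin n → ℕ} {i : Fin n} (hi : α i < S x n) :
    S x (lev n x α i : ℕ) ≤ α i ∧ α i < S x ((lev n x α i : ℕ) + 1) := by
  have h : ∃ j, j < n ∧ α i < S x (j + 1) := ⟨n - 1, by
    have := i.pos; constructor <;> [omega; simpa [Nat.sub_add_cancel this] using hi]⟩
  rw [lev, dif_pos h]
  refine ⟨?_, (Nat.find_spec h).2⟩
  rcases Nat.eq_zero_or_pos (Nat.find h) with h0 | h0
  · show ∑ k ∈ Finset.range (Nat.find h), x k ≤ α i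
    rw [h0, Finset.range_zero, Finset.sum_empty]; exact Nat.zero_le _
  · have := Nat.find_min h (m := Nat.find h - 1) (by omega)
    push_neg at this
    have h1 : Nat.find h - 1 < n := by have := (Nat.find_spec h).1; omega
    have := this h1
    simpa [Nat.sub_add_cancel h0] using this

lemma lev_le_iff {α : Fin n → ℕ} (hall : ∀ i, α i < S x n) (i j : Fin n) :
    lev n x α i ≤ j ↔ α i < S x ((j : ℕ) + 1) := by
  constructor
  · intro hle
    exact lt_of_lt_of_le (lev_spec (x := x) (hall i)).2
      (S_mono x (by exact_mod_cast Nat.add_le_add_right hle 1))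
  · intro hlt
    have h : ∃ j', j' < n ∧ α i < S x (j' + 1) := ⟨j, j.isLt, hlt⟩
    have : lev n x α i = ⟨Nat.find h, (Nat.find_spec h).1⟩ := by rw [lev, dif_pos h]
    rw [this]
    exact Fin.mk_le_of_le_val (Nat.find_le ⟨j.isLt, hlt⟩)

lemma lev_eq_of_Ico {α : Fin n → ℕ} {ℓ : Fin n → Fin n}
    (h : ∀ i, S x (ℓ i : ℕ) ≤ α i ∧ α i < S x ((ℓ i : ℕ) + 1)) :
    lev n x α = ℓ := by
  funext i
  have hex : ∃ j, j < n ∧ α i < S x (j + 1) := ⟨ℓ i, (ℓ i).isLt, (h i).2⟩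
  rw [lev, dif_pos hex]
  apply Fin.ext
  simp only
  rw [Nat.find_eq_iff]
  refine ⟨⟨(ℓ i).isLt, (h i).2⟩, ?_⟩
  intro m hm
  rintro ⟨-, hlt⟩
  exact absurd (lt_of_le_of_lt (le_trans (S_mono x (by omega)) (h i).1) hlt) (lt_irrefl _)

lemma hall_of_vpf {α : Fin n → ℕ} (hα : IsVPF' n x α) (i : Fin n) : α i < S x n := by
  have hn := i.pos
  have h := hα ⟨n - 1, by omega⟩
  simp only [Nat.sub_add_cancel hn] at h
  have hcard : (Finset.univ.filter fun i => α i < S x n).card = n := le_antisymm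
    (le_trans (Finset.card_filter_le _ _) (by simp)) (by simpa using h)
  have : (Finset.univ.filter fun i => α i < S x n) = Finset.univ :=
    Finset.eq_univ_of_card _ (by simpa using hcard)
  have := Finset.mem_filter.1 (this ▸ Finset.mem_univ i)
  exact this.2

/-- the finset of x-parking functions -/
def Fset (n : ℕ) (x : ℕ → ℕ) : Finset (Fin n → ℕ) :=
  (Fintype.piFinset fun _ : Fin n => Finset.range (S x n)).filter (IsVPF' n x)

lemma set_eq_Fset : {α : Fin n → ℕ | IsVPF' n x α} = ↑(Fset n x) := by
  ext α
  simp only [Set.mem_setOf_eq, Fset, Finset.coe_filter, Fintype.mem_piFinset,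
    Finset.mem_range, Set.mem_setOf_eq]
  exact ⟨fun h => ⟨fun i => hall_of_vpf h i, h⟩, fun h => h.2⟩

def Lfin (n : ℕ) : Finset (Fin n → Fin n) := Finset.univ.filter (InL n)

lemma card_Fset : (Fset n x).card = ∑ ℓ ∈ Lfin n, ∏ i, x (ℓ i) := by
  rw [Finset.card_eq_sum_card_fiberwise (f := lev n x) (t := Lfin n) ?_]
  · refine Finset.sum_congr rfl fun ℓ hℓ => ?_
    have hℓ' : InL n ℓ := (Finset.mem_filter.1 hℓ).2
    have hfib : (Fset n x).filter (fun α => lev n x α = ℓ) =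
        Fintype.piFinset fun i => Finset.Ico (S x (ℓ i : ℕ)) (S x ((ℓ i : ℕ) + 1)) := by
      ext α
      simp only [Finset.mem_filter, Fintype.mem_piFinset, Finset.mem_Ico, Fset,
        Fintype.mem_piFinset, Finset.mem_range]
      constructor
      · rintro ⟨⟨hbound, hvpf⟩, hlev⟩
        intro i
        have := lev_spec (x := x) (hbound i)
        rwa [hlev] at this
      · intro h
        have hall : ∀ i, α i < S x n := fun i =>
          lt_of_lt_of_le (h i).2 (S_mono x (ℓ i).isLt)
        refine ⟨⟨hall, fun j => ?_⟩, lev_eq_of_Ico h⟩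
        refine le_trans (hℓ' j) (Finset.card_le_card ?_)
        intro i hi
        simp only [Finset.mem_filter, Finset.mem_univ, true_and] at hi ⊢
        exact lt_of_lt_of_le (h i).2 (S_mono x (by exact_mod_cast Nat.add_le_add_right hi 1))
    rw [hfib, Fintype.card_piFinset]
    refine Finset.prod_congr rfl fun i _ => ?_
    rw [Nat.card_Ico, S_succ]
    omega
  · intro α hα
    have hα' : IsVPF' n x α := (Finset.mem_filter.1 hα).2
    have hall : ∀ i, α i < S x n := fun i => hall_of_vpf hα' i
    simp only [Lfin, Finset.mem_coe, Finset.mem_filter, Finset.mem_univ, true_and]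
    intro j
    refine le_trans (hα' j) (le_of_eq ?_)
    congr 1
    apply Finset.filter_congr
    intro i _
    simp [lev_le_iff hall]

lemma ncard_VPF : (Set.ncard {α : Fin n → ℕ | IsVPF' n x α}) =
    ∑ ℓ ∈ Lfin n, ∏ i, x (ℓ i) := by
  rw [set_eq_Fset, Set.ncard_coe_finset, card_Fset]



variable {n : ℕ}

/-- number of `i` with `ℓ i = j` -/
def cnt (ℓ : Fin n → Fin n) (j : Fin n) : ℕ := (Finset.univ.filter fun i => ℓ i = j).card

/-- partial sums of a vector indexed by `Fin n` -/
def psum (d : Fin n → ℕ) (m : ℕ) : ℕ := ∑ j ∈ Finset.univ.filter fun j : Fin n => (j : ℕ) < m, d j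

lemma psum_zero (d : Fin n → ℕ) : psum d 0 = 0 := by simp [psum]

lemma psum_succ (d : Fin n → ℕ) {m : ℕ} (hm : m < n) :
    psum d (m + 1) = psum d m + d ⟨m, hm⟩ := by
  rw [psum, psum]
  have : (Finset.univ.filter fun j : Fin n => (j : ℕ) < m + 1) =
      insert ⟨m, hm⟩ (Finset.univ.filter fun j : Fin n => (j : ℕ) < m) := by
    ext j
    simp only [Finset.mem_filter, Finset.mem_univ, true_and, Finset.mem_insert, Fin.ext_iff]
    omega
  rw [this, Finset.sum_insert (by simp), add_comm]

lemma psum_of_le (d : Fin n → ℕ) {m : ℕ} (hm : n ≤ m) : psum d m = ∑ j, d j := by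
  rw [psum]
  congr 1
  refine Finset.filter_true_of_mem fun j _ => lt_of_lt_of_le j.isLt hm

lemma psum_mono (d : Fin n → ℕ) : Monotone (psum d) := fun a b h =>
  Finset.sum_le_sum_of_subset (by
    intro j hj
    simp only [Finset.mem_filter, Finset.mem_univ, true_and] at hj ⊢
    omega)

lemma sum_cnt (ℓ : Fin n → Fin n) : ∑ j, cnt ℓ j = n := by
  classical
  have := Finset.card_eq_sum_card_fiberwise
    (f := ℓ) (s := Finset.univ) (t := Finset.univ) (fun i _ => Finset.mem_univ _)
  simp only [Finset.card_univ, Fintype.card_fin] at this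
  exact this.symm

lemma card_le_filter_eq_psum (ℓ : Fin n → Fin n) (j : Fin n) :
    (Finset.univ.filter fun i => ℓ i ≤ j).card = psum (cnt ℓ) ((j : ℕ) + 1) := by
  classical
  rw [Finset.card_eq_sum_card_fiberwise (f := ℓ)
    (t := Finset.univ.filter fun b : Fin n => (b : ℕ) < (j : ℕ) + 1) ?_]
  · rw [psum]
    refine Finset.sum_congr rfl fun b hb => ?_
    simp only [Finset.mem_filter, Finset.mem_univ, true_and] at hb
    rw [cnt]
    congr 1
    ext i
    simp only [Finset.mem_filter, Finset.mem_univ, true_and, and_iff_right_iff_imp]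
    intro h
    rw [h]
    exact Fin.le_def.2 (by omega)
  · intro i hi
    simp only [Finset.mem_coe, Finset.mem_filter, Finset.mem_univ, true_and] at hi ⊢
    exact Nat.lt_succ_of_le (Fin.le_def.1 hi)

lemma prod_pow_cnt (x : ℕ → ℕ) (ℓ : Fin n → Fin n) :
    ∏ i, x (ℓ i) = ∏ j : Fin n, x (j : ℕ) ^ cnt ℓ j := by
  classical
  rw [← Finset.prod_fiberwise_of_maps_to (g := ℓ) (t := Finset.univ)
    (fun i _ => Finset.mem_univ _) (fun i => x (ℓ i : ℕ))]
  refine Finset.prod_congr rfl fun j _ => ?_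
  rw [cnt, ← Finset.prod_const]
  refine Finset.prod_congr rfl fun i hi => ?_
  simp only [Finset.mem_filter] at hi
  rw [hi.2]

/-- transfer a val-predicate filter card from `Fin m` to `range m` -/
lemma card_filter_val {m : ℕ} (p : ℕ → Prop) [DecidablePred p] :
    ((Finset.univ : Finset (Fin m)).filter fun k : Fin m => p (k : ℕ)).card
      = ((Finset.range m).filter p).card := by
  rw [Finset.card_filter, Finset.card_filter,
    Fin.sum_univ_eq_sum_range (fun k => if p k then 1 else 0) m]

/-- interval counting in `Fin m` -/
lemma card_filter_val_Ico {m a b : ℕ} (hb : b ≤ m) :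
    ((Finset.univ : Finset (Fin m)).filter fun k : Fin m => a ≤ (k : ℕ) ∧ (k : ℕ) < b).card
      = b - a := by
  rw [card_filter_val (fun k => a ≤ k ∧ k < b)]
  have : (Finset.range m).filter (fun k => a ≤ k ∧ k < b) = Finset.Ico a b := by
    ext k
    simp only [Finset.mem_filter, Finset.mem_range, Finset.mem_Ico]
    omega
  rw [this, Nat.card_Ico]

lemma st_aux (d : Fin n → ℕ) (hsum : ∑ j, d j = n) (k : Fin n) :
    (k : ℕ) < psum d ((n - 1) + 1) := by
  rw [Nat.sub_add_cancel k.pos, psum_of_le d (le_refl n), hsum]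
  exact k.isLt

lemma st_ex (d : Fin n → ℕ) (hsum : ∑ j, d j = n) (k : Fin n) :
    ∃ m, (k : ℕ) < psum d (m + 1) := ⟨n - 1, st_aux d hsum k⟩

/-- the weakly increasing function with prescribed fiber counts -/
def st (d : Fin n → ℕ) (hsum : ∑ j, d j = n) (k : Fin n) : Fin n :=
  ⟨Nat.find (st_ex d hsum k), by
    have h : Nat.find (st_ex d hsum k) ≤ n - 1 := Nat.find_le (st_aux d hsum k)
    have := k.pos
    omega⟩

lemma st_eq_iff (d : Fin n → ℕ) (hsum : ∑ j, d j = n) (k : Fin n) (j : Fin n) :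
    st d hsum k = j ↔ psum d (j : ℕ) ≤ (k : ℕ) ∧ (k : ℕ) < psum d ((j : ℕ) + 1) := by
  rw [st, Fin.ext_iff]
  simp only
  rw [Nat.find_eq_iff]
  constructor
  · rintro ⟨h1, h2⟩
    refine ⟨?_, h1⟩
    rcases Nat.eq_zero_or_pos (j : ℕ) with h0 | h0
    · rw [h0, psum_zero]; exact Nat.zero_le _
    · have := h2 ((j : ℕ) - 1) (by omega)
      push_neg at this
      rwa [Nat.sub_add_cancel h0] at this
  · rintro ⟨h1, h2⟩
    refine ⟨h2, fun m hm hc => ?_⟩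
    exact absurd (lt_of_lt_of_le hc (le_trans (psum_mono d (by omega)) h1)) (lt_irrefl _)

lemma cnt_st (d : Fin n → ℕ) (hsum : ∑ j, d j = n) (j : Fin n) :
    cnt (st d hsum) j = d j := by
  classical
  rw [cnt]
  have : (Finset.univ.filter fun k => st d hsum k = j) =
      (Finset.univ.filter fun k : Fin n =>
        psum d (j : ℕ) ≤ (k : ℕ) ∧ (k : ℕ) < psum d ((j : ℕ) + 1)) := by
    ext k
    simp only [Finset.mem_filter, Finset.mem_univ, true_and]
    exact st_eq_iff d hsum k j
  rw [this, card_filter_val_Ico (by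
    calc psum d ((j : ℕ) + 1) ≤ psum d n := psum_mono d j.isLt
    _ = n := by rw [psum_of_le d (le_refl n), hsum])]
  rw [psum_succ d j.isLt]
  simp

lemma cnt_comp_perm (f : Fin n → Fin n) (σ : Equiv.Perm (Fin n)) (j : Fin n) :
    cnt (f ∘ σ) j = cnt f j := by
  classical
  rw [cnt, cnt]
  apply Finset.card_bij (fun i _ => σ i)
  · intro i hi
    simp only [Finset.mem_filter, Finset.mem_univ, true_and, Function.comp] at hi ⊢
    exact hi
  · intro a ha b hb hab
    exact σ.injective hab
  · intro b hb
    refine ⟨σ.symm b, ?_, by simp⟩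
    simp only [Finset.mem_filter, Finset.mem_univ, true_and, Function.comp] at hb ⊢
    simpa using hb

/-- permutations matching two functions with equal fiber counts -/
def permFiberEquiv (f g : Fin n → Fin n) :
    {σ : Equiv.Perm (Fin n) // g ∘ ⇑σ = f} ≃ ∀ j, {i // f i = j} ≃ {i // g i = j} where
  toFun := fun ⟨σ, hσ⟩ j =>
    { toFun := fun i => ⟨σ i.1, by
        have := congrFun hσ i.1
        simp only [Function.comp_apply] at this
        rw [this, i.2]⟩
      invFun := fun i => ⟨σ.symm i.1, by
        have := congrFun hσ (σ.symm i.1)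
        simp only [Function.comp_apply, Equiv.apply_symm_apply] at this
        rw [← this, i.2]⟩
      left_inv := fun i => by simp
      right_inv := fun i => by simp }
  invFun := fun E =>
    ⟨(Equiv.sigmaFiberEquiv f).symm.trans ((Equiv.sigmaCongrRight E).trans
        (Equiv.sigmaFiberEquiv g)), by
      funext i
      exact (E (f i) ⟨i, rfl⟩).2⟩
  left_inv := fun ⟨σ, hσ⟩ => by
    apply Subtype.ext
    apply Equiv.ext
    intro i
    rfl
  right_inv := fun E => by
    funext j
    apply Equiv.ext
    rintro ⟨i, hi⟩
    apply Subtype.ext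
    simp only [Equiv.trans_apply, Equiv.sigmaCongrRight_apply, Equiv.sigmaFiberEquiv]
    cases hi
    rfl

lemma card_perm_fiber (f g : Fin n → Fin n) (h : ∀ j, cnt f j = cnt g j) :
    (Finset.univ.filter fun σ : Equiv.Perm (Fin n) => g ∘ ⇑σ = f).card
      = ∏ j, (cnt f j).factorial := by
  classical
  rw [← Fintype.card_subtype]
  rw [Fintype.card_congr (permFiberEquiv f g)]
  rw [Fintype.card_pi]
  refine Finset.prod_congr rfl fun j _ => ?_
  have hf : Fintype.card {i // f i = j} = cnt f j := Fintype.card_subtype _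
  have hg : Fintype.card {i // g i = j} = cnt g j := Fintype.card_subtype _
  have e : {i // f i = j} ≃ {i // g i = j} :=
    Fintype.equivOfCardEq (by rw [hf, hg, h])
  rw [Fintype.card_equiv e, hf]

/-- functions with prescribed fiber counts -/
def Cd (d : Fin n → ℕ) : Finset (Fin n → Fin n) :=
  Finset.univ.filter fun ℓ => ∀ j, cnt ℓ j = d j

lemma card_Cd_mul (d : Fin n → ℕ) (hsum : ∑ j, d j = n) :
    (Cd d).card * ∏ j, (d j).factorial = n.factorial := by
  classical
  have hperm : (Finset.univ : Finset (Equiv.Perm (Fin n))).card = n.factorial := by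
    rw [Finset.card_univ, Fintype.card_perm, Fintype.card_fin]
  rw [← hperm]
  rw [Finset.card_eq_sum_card_fiberwise (f := fun σ : Equiv.Perm (Fin n) => st d hsum ∘ ⇑σ)
    (t := Cd d) (fun σ _ => by
      simp only [Cd, Finset.mem_coe, Finset.mem_filter, Finset.mem_univ, true_and]
      intro j
      rw [cnt_comp_perm, cnt_st])]
  rw [Finset.sum_congr rfl fun ℓ hℓ => ?_, Finset.sum_const, smul_eq_mul, mul_comm]
  have hℓ' : ∀ j, cnt ℓ j = d j := by
    have := Finset.mem_filter.1 hℓ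
    exact this.2
  have : (Finset.univ.filter fun σ : Equiv.Perm (Fin n) => st d hsum ∘ ⇑σ = ℓ).card
      = ∏ j, (cnt ℓ j).factorial := card_perm_fiber ℓ (st d hsum)
      (fun j => by rw [hℓ' j, cnt_st])
  rw [this]
  exact Finset.prod_congr rfl fun j _ => by rw [hℓ' j]



variable {n : ℕ}

/-- ancestor relation -/
def Anc (T : PlaneTree n) (u v : Fin (n + 1)) : Prop := ∃ m, T.par^[m] v = u

lemma par_le (T : PlaneTree n) (v : Fin (n + 1)) : T.par v ≤ v := by
  by_cases h : v = 0
  · rw [h, T.par_zero]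
  · exact le_of_lt (T.par_lt v h)

lemma iter_par_le (T : PlaneTree n) (m : ℕ) (v : Fin (n + 1)) : T.par^[m] v ≤ v := by
  induction m with
  | zero => simp
  | succ m ih =>
    rw [Function.iterate_succ_apply']
    exact le_trans (par_le T _) ih

lemma anc_refl (T : PlaneTree n) (v : Fin (n + 1)) : Anc T v v := ⟨0, rfl⟩

lemma anc_le {T : PlaneTree n} {u v : Fin (n + 1)} (h : Anc T u v) : u ≤ v := by
  obtain ⟨m, hm⟩ := h
  rw [← hm]
  exact iter_par_le T m v

lemma anc_trans {T : PlaneTree n} {u v w : Fin (n + 1)}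
    (h1 : Anc T u v) (h2 : Anc T v w) : Anc T u w := by
  obtain ⟨a, ha⟩ := h1
  obtain ⟨b, hb⟩ := h2
  exact ⟨a + b, by rw [Function.iterate_add_apply, hb, ha]⟩

lemma anc_zero (T : PlaneTree n) (v : Fin (n + 1)) : Anc T 0 v := by
  rcases eq_or_ne v 0 with rfl | hv
  · exact ⟨0, rfl⟩
  · obtain ⟨m, hm⟩ := anc_zero T (T.par v)
    exact ⟨m + 1, by rw [Function.iterate_succ_apply, hm]⟩
termination_by (v : ℕ)
decreasing_by exact T.par_lt v hv

lemma anc_par {T : PlaneTree n} {u v : Fin (n + 1)} (hv : v ≠ 0)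
    (h : Anc T u v) (hne : u ≠ v) : Anc T u (T.par v) := by
  obtain ⟨m, hm⟩ := h
  cases m with
  | zero => exact absurd hm.symm hne
  | succ m => exact ⟨m, by rwa [Function.iterate_succ_apply] at hm⟩

lemma anc_interval {T : PlaneTree n} {u v w : Fin (n + 1)}
    (h : Anc T u v) (h1 : u ≤ w) (h2 : w ≤ v) : Anc T u w := by
  by_cases hu : u = 0
  · rw [hu]; exact anc_zero T w
  · rcases eq_or_lt_of_le h1 with rfl | h1'
    · exact anc_refl T u
    · rcases eq_or_lt_of_le h2 with rfl | h2'
      · exact h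
      · exact T.plane u w v (Fin.pos_of_ne_zero hu) h1' h2' h

open Finset in
/-- children of vertices with label in `[a, b)` -/
def Bset (T : PlaneTree n) (a b : ℕ) : Finset (Fin (n + 1)) :=
  Finset.univ.filter fun t => t ≠ 0 ∧ a ≤ (T.par t : ℕ) ∧ (T.par t : ℕ) < b

lemma Bset_card_eq (T : PlaneTree n) (a b : ℕ) :
    (Bset T a b).card = ∑ i ∈ Finset.univ.filter
      (fun i : Fin (n + 1) => a ≤ (i : ℕ) ∧ (i : ℕ) < b), outdeg T i := by
  classical
  rw [Finset.card_eq_sum_card_fiberwise (f := T.par)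
    (t := Finset.univ.filter fun i : Fin (n + 1) => a ≤ (i : ℕ) ∧ (i : ℕ) < b) ?_]
  · refine Finset.sum_congr rfl fun i hi => ?_
    simp only [Finset.mem_filter, Finset.mem_univ, true_and] at hi
    rw [outdeg]
    congr 1
    ext t
    simp only [Bset, Finset.mem_filter, Finset.mem_univ, true_and]
    constructor
    · rintro ⟨⟨h1, -⟩, h2⟩; exact ⟨h1, h2⟩
    · rintro ⟨h1, h2⟩
      exact ⟨⟨h1, by rw [h2]; exact hi⟩, h2⟩
  · intro t ht
    simp only [Bset, Finset.mem_coe, Finset.mem_filter, Finset.mem_univ, true_and] at ht ⊢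
    exact ht.2

/-- the key characterization of the ancestor relation by outdegree counts -/
lemma anc_iff_count (T : PlaneTree n) (u v : Fin (n + 1)) :
    Anc T u v ↔ u ≤ v ∧
      ∀ w : ℕ, (u : ℕ) < w → w ≤ (v : ℕ) → w - (u : ℕ) ≤ (Bset T (u : ℕ) w).card := by
  classical
  constructor
  · intro hanc
    refine ⟨anc_le hanc, fun w hw1 hw2 => ?_⟩
    have hsub : (Finset.univ.filter fun t : Fin (n + 1) =>
        (u : ℕ) + 1 ≤ (t : ℕ) ∧ (t : ℕ) < w + 1) ⊆ Bset T (u : ℕ) w := by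
      intro t ht
      simp only [Finset.mem_filter, Finset.mem_univ, true_and] at ht
      have htne : t ≠ 0 := by
        intro h
        rw [h] at ht
        simp only [Fin.val_zero] at ht
        omega
      have hpar := T.par_lt t htne
      have hanc_t : Anc T u t := anc_interval hanc
        (Fin.le_def.2 (by omega)) (Fin.le_def.2 (by omega))
      have htu : t ≠ u := by
        intro h
        rw [h] at ht
        omega
      have := anc_le (anc_par htne hanc_t (Ne.symm htu))
      simp only [Bset, Finset.mem_filter, Finset.mem_univ, true_and]
      refine ⟨htne, Fin.le_def.1 this, ?_⟩
      have := Fin.lt_def.1 hpar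
      omega
    have hcard : (Finset.univ.filter fun t : Fin (n + 1) =>
        (u : ℕ) + 1 ≤ (t : ℕ) ∧ (t : ℕ) < w + 1).card = w - (u : ℕ) := by
      rw [card_filter_val_Ico (by have := v.isLt; omega)]
      omega
    rw [← hcard]
    exact Finset.card_le_card hsub
  · rintro ⟨hle, hcnt⟩
    by_contra hanc
    have hne : u ≠ v := fun h => hanc (h ▸ anc_refl T u)
    have hu0 : u ≠ 0 := fun h => hanc (h ▸ anc_zero T v)
    have huv : (u : ℕ) < (v : ℕ) := lt_of_le_of_ne (Fin.le_def.1 hle)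
      (fun h => hne (Fin.ext h))
    set St := Finset.univ.filter fun t : Fin (n + 1) => Anc T u t with hSt
    have hune : u ∈ St := Finset.mem_filter.2 ⟨Finset.mem_univ u, anc_refl T u⟩
    set r := St.max' ⟨u, hune⟩ with hr
    have hrSt : r ∈ St := St.max'_mem _
    have hanc_r : Anc T u r := (Finset.mem_filter.1 hrSt).2
    have hur : u ≤ r := anc_le hanc_r
    have hrv : (r : ℕ) < (v : ℕ) := by
      rcases lt_or_ge (r : ℕ) (v : ℕ) with h | h
      · exact h
      · exact absurd (anc_interval hanc_r hle (Fin.le_def.2 h)) hanc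
    have hkey := hcnt ((r : ℕ) + 1) (by have := Fin.le_def.1 hur; omega) (by omega)
    -- Bset ⊆ St.erase u
    have hsub : Bset T (u : ℕ) ((r : ℕ) + 1) ⊆ St.erase u := by
      intro t ht
      simp only [Bset, Finset.mem_filter, Finset.mem_univ, true_and] at ht
      obtain ⟨ht0, ht1, ht2⟩ := ht
      have hanc_pt : Anc T u (T.par t) := anc_interval hanc_r
        (Fin.le_def.2 ht1) (Fin.le_def.2 (by omega))
      have hanc_t : Anc T u t := anc_trans hanc_pt ⟨1, rfl⟩
      have htu : t ≠ u := by
        intro h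
        subst h
        have := Fin.lt_def.1 (T.par_lt t ht0)
        omega
      exact Finset.mem_erase.2 ⟨htu, Finset.mem_filter.2 ⟨Finset.mem_univ t, hanc_t⟩⟩
    have hStcard : St.card ≤ (r : ℕ) - (u : ℕ) + 1 := by
      have hsub2 : St ⊆ Finset.univ.filter fun t : Fin (n + 1) =>
          (u : ℕ) ≤ (t : ℕ) ∧ (t : ℕ) < (r : ℕ) + 1 := by
        intro t ht
        have hanc_t : Anc T u t := (Finset.mem_filter.1 ht).2
        simp only [Finset.mem_filter, Finset.mem_univ, true_and]
        refine ⟨Fin.le_def.1 (anc_le hanc_t), ?_⟩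
        have := Fin.le_def.1 (St.le_max' t ht)
        omega
      calc St.card ≤ _ := Finset.card_le_card hsub2
      _ = (r : ℕ) + 1 - (u : ℕ) := card_filter_val_Ico (by have := r.isLt; omega)
      _ ≤ (r : ℕ) - (u : ℕ) + 1 := by omega
    have hB : (Bset T (u : ℕ) ((r : ℕ) + 1)).card ≤ (r : ℕ) - (u : ℕ) := by
      calc (Bset T (u : ℕ) ((r : ℕ) + 1)).card ≤ (St.erase u).card :=
            Finset.card_le_card hsub
      _ = St.card - 1 := Finset.card_erase_of_mem hune
      _ ≤ (r : ℕ) - (u : ℕ) := by omega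
    have := Fin.le_def.1 hur
    omega

lemma anc_iff_anc_of_outdeg_eq {T T' : PlaneTree n}
    (h : ∀ i, outdeg T i = outdeg T' i) (u v : Fin (n + 1)) :
    Anc T u v ↔ Anc T' u v := by
  have hB : ∀ a b, (Bset T a b).card = (Bset T' a b).card := by
    intro a b
    rw [Bset_card_eq, Bset_card_eq]
    exact Finset.sum_congr rfl fun i _ => h i
  rw [anc_iff_count, anc_iff_count]
  constructor
  · rintro ⟨h1, h2⟩
    exact ⟨h1, fun w hw1 hw2 => (hB (u : ℕ) w) ▸ h2 w hw1 hw2⟩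
  · rintro ⟨h1, h2⟩
    exact ⟨h1, fun w hw1 hw2 => (hB (u : ℕ) w) ▸ h2 w hw1 hw2⟩

lemma planeTree_ext {T T' : PlaneTree n} (h : T.par = T'.par) : T = T' := by
  cases T; cases T'; simpa using h

lemma eq_of_outdeg_eq {T T' : PlaneTree n}
    (h : ∀ i, outdeg T i = outdeg T' i) : T = T' := by
  apply planeTree_ext
  funext v
  rcases eq_or_ne v 0 with rfl | hv
  · rw [T.par_zero, T'.par_zero]
  · have key : ∀ (A B : PlaneTree n), (∀ u w, Anc A u w ↔ Anc B u w) →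
        A.par v ≤ B.par v := by
      intro A B hAB
      have h1 : Anc B (A.par v) v := (hAB _ _).1 ⟨1, rfl⟩
      have h2 : A.par v ≠ v := ne_of_lt (A.par_lt v hv)
      exact anc_le (anc_par hv h1 h2)
    exact le_antisymm
      (key T T' (fun u w => anc_iff_anc_of_outdeg_eq h u w))
      (key T' T (fun u w => (anc_iff_anc_of_outdeg_eq h u w).symm))


/-! ### construction of a plane tree from a Łukasiewicz vector -/

/-- the Łukasiewicz condition -/
def HLuk (d : Fin n → ℕ) : Prop := ∀ j : Fin n, (j : ℕ) + 1 ≤ psum d ((j : ℕ) + 1)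

/-- the "subtree" relation on labels determined by `d` -/
def Rd (d : Fin n → ℕ) (u v : ℕ) : Prop :=
  u ≤ v ∧ ∀ w ≤ v, u < w → w + psum d u ≤ psum d w + u

instance (d : Fin n → ℕ) (u v : ℕ) : Decidable (Rd d u v) := by
  unfold Rd; infer_instance

lemma Rd_refl (d : Fin n → ℕ) (u : ℕ) : Rd d u u :=
  ⟨le_rfl, fun w hw1 hw2 => by omega⟩

lemma Rd_restrict {d : Fin n → ℕ} {u v w' : ℕ} (h : Rd d u v) (h1 : u ≤ w') (h2 : w' ≤ v) :
    Rd d u w' := ⟨h1, fun w hw1 hw2 => h.2 w (le_trans hw1 h2) hw2⟩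

lemma Rd_trans {d : Fin n → ℕ} {u v t : ℕ} (h1 : Rd d u v) (h2 : Rd d v t) : Rd d u t := by
  refine ⟨le_trans h1.1 h2.1, fun w hw1 hw2 => ?_⟩
  rcases le_or_gt w v with h | h
  · exact h1.2 w h hw2
  · have hA := h2.2 w hw1 h
    rcases eq_or_lt_of_le h1.1 with rfl | huv
    · omega
    · have hB := h1.2 v le_rfl huv
      omega

lemma hluk_psum {d : Fin n → ℕ} (hd : HLuk d) {m : ℕ} (h1 : 0 < m) (h2 : m ≤ n) :
    m ≤ psum d m := by
  have := hd ⟨m - 1, by omega⟩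
  simp only at this
  rwa [Nat.sub_add_cancel h1] at this

lemma Rd_zero {d : Fin n → ℕ} (hd : HLuk d) {v : ℕ} (hv : v ≤ n) : Rd d 0 v := by
  refine ⟨Nat.zero_le v, fun w hw1 hw2 => ?_⟩
  have := hluk_psum hd hw2 (le_trans hw1 hv)
  rw [psum_zero]
  omega

/-- the parent function on labels -/
def par0 (d : Fin n → ℕ) (v : ℕ) : ℕ := Nat.findGreatest (fun u => u < v ∧ Rd d u v) v

lemma par0_zero (d : Fin n → ℕ) : par0 d 0 = 0 := rfl

lemma par0_le (d : Fin n → ℕ) (v : ℕ) : par0 d v ≤ v := Nat.findGreatest_le v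

lemma par0_spec {d : Fin n → ℕ} (hd : HLuk d) {v : ℕ} (h1 : 0 < v) (h2 : v ≤ n) :
    par0 d v < v ∧ Rd d (par0 d v) v :=
  Nat.findGreatest_spec (P := fun u => u < v ∧ Rd d u v) (Nat.zero_le v) ⟨h1, Rd_zero hd h2⟩

lemma le_par0 {d : Fin n → ℕ} {u v : ℕ} (hu : u < v) (hR : Rd d u v) : u ≤ par0 d v :=
  Nat.le_findGreatest (P := fun u => u < v ∧ Rd d u v) (le_of_lt hu) ⟨hu, hR⟩

lemma iter_par0_Rd {d : Fin n → ℕ} (hd : HLuk d) :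
    ∀ (m v : ℕ), v ≤ n → Rd d ((par0 d)^[m] v) v ∧ (par0 d)^[m] v ≤ n := by
  intro m
  induction m with
  | zero => exact fun v hv => ⟨Rd_refl d v, hv⟩
  | succ m ih =>
    intro v hv
    rw [Function.iterate_succ_apply]
    have h1 : Rd d (par0 d v) v ∧ par0 d v ≤ n := by
      rcases Nat.eq_zero_or_pos v with rfl | hv0
      · rw [par0_zero]; exact ⟨Rd_refl d 0, by omega⟩
      · exact ⟨(par0_spec hd hv0 hv).2, le_trans (par0_le d v) hv⟩
    obtain ⟨hR, hle⟩ := ih (par0 d v) h1.2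
    exact ⟨Rd_trans hR h1.1, hle⟩

lemma Rd_to_iter {d : Fin n → ℕ} (hd : HLuk d) :
    ∀ v, v ≤ n → ∀ u, Rd d u v → ∃ m, (par0 d)^[m] v = u := by
  intro v
  induction v using Nat.strong_induction_on with
  | _ v ih =>
    intro hv u hR
    rcases eq_or_lt_of_le hR.1 with rfl | huv
    · exact ⟨0, rfl⟩
    · have hv0 : 0 < v := by omega
      have hspec := par0_spec hd hv0 hv
      have hup : u ≤ par0 d v := le_par0 huv hR
      have hR' : Rd d u (par0 d v) := Rd_restrict hR hup (par0_le d v)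
      obtain ⟨m, hm⟩ := ih (par0 d v) hspec.1 (le_trans (par0_le d v) hv) u hR'
      exact ⟨m + 1, by rw [Function.iterate_succ_apply, hm]⟩

/-- the parent function as a function on `Fin (n+1)` -/
def parF (d : Fin n → ℕ) : Fin (n + 1) → Fin (n + 1) := fun v =>
  ⟨par0 d (v : ℕ), lt_of_le_of_lt (par0_le d (v : ℕ)) v.isLt⟩

lemma parF_iter_val (d : Fin n → ℕ) :
    ∀ (m : ℕ) (v : Fin (n + 1)), (((parF d)^[m] v : Fin (n + 1)) : ℕ) = (par0 d)^[m] (v : ℕ) := by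
  intro m
  induction m with
  | zero => intro v; rfl
  | succ m ih =>
    intro v
    rw [Function.iterate_succ_apply, Function.iterate_succ_apply]
    exact ih (parF d v)

/-- the plane tree constructed from a Łukasiewicz vector -/
def mkTree (d : Fin n → ℕ) (hd : HLuk d) : PlaneTree n where
  par := parF d
  par_zero := Fin.ext (by simp [parF, par0_zero])
  par_lt := fun v hv => Fin.lt_def.2 (by
    have h1 : 0 < (v : ℕ) := by
      rcases Nat.eq_zero_or_pos (v : ℕ) with h | h
      · exact absurd (Fin.ext h) hv
      · exact h
    exact (par0_spec hd h1 (by have := v.isLt; omega)).1)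
  plane := by
    rintro i j k h0 hij hjk ⟨m, hm⟩
    have hk : (k : ℕ) ≤ n := by have := k.isLt; omega
    have hRik : Rd d (i : ℕ) (k : ℕ) := by
      have h := (iter_par0_Rd hd m (k : ℕ) hk).1
      have hval : (par0 d)^[m] (k : ℕ) = (i : ℕ) := by
        rw [← parF_iter_val d m k]
        exact congrArg Fin.val hm
      rwa [hval] at h
    have hRij : Rd d (i : ℕ) (j : ℕ) :=
      Rd_restrict hRik (le_of_lt (Fin.lt_def.1 hij)) (le_of_lt (Fin.lt_def.1 hjk))
    obtain ⟨m', hm'⟩ := Rd_to_iter hd (j : ℕ) (by have := j.isLt; omega) (i : ℕ) hRij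
    exact ⟨m', Fin.ext (by rw [parF_iter_val]; exact hm')⟩

/-! ### outdegrees of the constructed tree -/

/-- the Łukasiewicz path -/
def eZ (d : Fin n → ℕ) (w : ℕ) : ℤ := (psum d w : ℤ) - w

lemma Rd_eZ {d : Fin n → ℕ} {u v : ℕ} (h : Rd d u v) {w : ℕ} (h1 : w ≤ v) (h2 : u < w) :
    eZ d u ≤ eZ d w := by
  have := h.2 w h1 h2
  unfold eZ
  push_cast
  omega

lemma Rd_of_eZ {d : Fin n → ℕ} {u v : ℕ} (h1 : u ≤ v)
    (h : ∀ w ≤ v, u < w → eZ d u ≤ eZ d w) : Rd d u v := by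
  refine ⟨h1, fun w hw1 hw2 => ?_⟩
  have := h w hw1 hw2
  unfold eZ at this
  push_cast at this
  omega

lemma eZ_succ {d : Fin n → ℕ} {u : ℕ} (hu : u < n) :
    eZ d (u + 1) = eZ d u + (d ⟨u, hu⟩ : ℤ) - 1 := by
  unfold eZ
  rw [psum_succ d hu]
  push_cast
  ring

/-- key lemma: the path value at `v` is strictly below all values strictly between
the parent of `v` and `v`. -/
lemma eZ_lt_of_par0 {d : Fin n → ℕ} (hd : HLuk d) {u v w : ℕ} (hv0 : 0 < v) (hv : v ≤ n)
    (hu : par0 d v = u) (hw1 : u < w) (hw2 : w < v) : eZ d v < eZ d w := by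
  by_contra hcon
  push_neg at hcon
  classical
  have hne : (Finset.Ioo u v).Nonempty := ⟨w, Finset.mem_Ioo.2 ⟨hw1, hw2⟩⟩
  set m := ((Finset.Ioo u v).image (eZ d)).min' (hne.image _) with hm
  have hminle : ∀ t ∈ Finset.Ioo u v, m ≤ eZ d t := fun t ht =>
    Finset.min'_le _ _ (Finset.mem_image_of_mem _ ht)
  obtain ⟨t0, ht0, hmt0⟩ := Finset.mem_image.1 (((Finset.Ioo u v).image (eZ d)).min'_mem (hne.image _))
  have hAne : ((Finset.Ioo u v).filter fun t => eZ d t = m).Nonempty := ⟨t0, Finset.mem_filter.2 ⟨ht0, hmt0⟩⟩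
  set ws := ((Finset.Ioo u v).filter fun t => eZ d t = m).max' hAne with hws
  have hwsA := ((Finset.Ioo u v).filter fun t => eZ d t = m).max'_mem hAne
  rw [Finset.mem_filter, Finset.mem_Ioo] at hwsA
  obtain ⟨⟨hws1, hws2⟩, hws3⟩ := hwsA
  have hRd : Rd d ws v := by
    refine Rd_of_eZ (le_of_lt hws2) (fun t ht1 ht2 => ?_)
    rw [hws3]
    rcases eq_or_lt_of_le ht1 with rfl | h
    · calc m ≤ eZ d w := hminle w (Finset.mem_Ioo.2 ⟨hw1, hw2⟩)
      _ ≤ eZ d t := hcon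
    · exact hminle t (Finset.mem_Ioo.2 ⟨lt_trans hws1 ht2, h⟩)
  have := le_par0 hws2 hRd
  omega

lemma eZ_le_of_par0 {d : Fin n → ℕ} (hd : HLuk d) {u v : ℕ} (hv0 : 0 < v) (hv : v ≤ n)
    (hu : par0 d v = u) : eZ d u ≤ eZ d v := by
  have h := (par0_spec hd hv0 hv).2
  rw [hu] at h
  exact Rd_eZ h le_rfl (hu ▸ (par0_spec hd hv0 hv).1)

/-- extension of `d` to `Fin (n+1)` -/
def dv (d : Fin n → ℕ) (i : Fin (n + 1)) : ℕ :=
  if h : (i : ℕ) < n then d ⟨(i : ℕ), h⟩ else 0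

lemma outdeg_mkTree_le {d : Fin n → ℕ} (hd : HLuk d) (i : Fin (n + 1)) :
    outdeg (mkTree d hd) i ≤ dv d i := by
  classical
  rw [outdeg, ← Finset.card_range (dv d i)]
  refine Finset.card_le_card_of_injOn (fun v => (eZ d (v : ℕ) - eZ d (i : ℕ)).toNat) ?_ ?_
  · intro v hvmem
    simp only [Finset.mem_coe, Finset.mem_filter, Finset.mem_univ, true_and] at hvmem
    obtain ⟨hv0, hpar⟩ := hvmem
    have hpar' : par0 d (v : ℕ) = (i : ℕ) := congrArg Fin.val hpar
    have hv0' : 0 < (v : ℕ) := by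
      rcases Nat.eq_zero_or_pos (v : ℕ) with h | h
      · exact absurd (Fin.ext h) hv0
      · exact h
    have hvn : (v : ℕ) ≤ n := by have := v.isLt; omega
    have huv : (i : ℕ) < (v : ℕ) := hpar' ▸ (par0_spec hd hv0' hvn).1
    have hun : (i : ℕ) < n := by omega
    have hlow : eZ d (i : ℕ) ≤ eZ d (v : ℕ) := eZ_le_of_par0 hd hv0' hvn hpar'
    have hup : eZ d (v : ℕ) ≤ eZ d ((i : ℕ) + 1) := by
      rcases eq_or_lt_of_le (Nat.succ_le_of_lt huv) with h | h
      · rw [Nat.succ_eq_add_one] at h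
        rw [h]
      · exact le_of_lt (eZ_lt_of_par0 hd hv0' hvn hpar' (Nat.lt_succ_self _) h)
    have hdv : dv d i = d ⟨(i : ℕ), hun⟩ := dif_pos hun
    have := eZ_succ (d := d) hun
    simp only [Finset.mem_coe, Finset.mem_range]
    omega
  · intro v hv v' hv' heq
    replace heq : (eZ d (v : ℕ) - eZ d (i : ℕ)).toNat
        = (eZ d (v' : ℕ) - eZ d (i : ℕ)).toNat := heq
    simp only [Finset.coe_filter, Set.mem_setOf_eq, Finset.mem_univ, true_and] at hv hv'
    obtain ⟨hv0, hpar⟩ := hv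
    obtain ⟨hv0', hpar'⟩ := hv'
    have hp1 : par0 d (v : ℕ) = (i : ℕ) := congrArg Fin.val hpar
    have hp2 : par0 d (v' : ℕ) = (i : ℕ) := congrArg Fin.val hpar'
    have hvpos : 0 < (v : ℕ) := by
      rcases Nat.eq_zero_or_pos (v : ℕ) with h | h
      · exact absurd (Fin.ext h) hv0
      · exact h
    have hvpos' : 0 < (v' : ℕ) := by
      rcases Nat.eq_zero_or_pos (v' : ℕ) with h | h
      · exact absurd (Fin.ext h) hv0'
      · exact h
    have hvn : (v : ℕ) ≤ n := by have := v.isLt; omega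
    have hvn' : (v' : ℕ) ≤ n := by have := v'.isLt; omega
    have hiv : (i : ℕ) < (v : ℕ) := hp1 ▸ (par0_spec hd hvpos hvn).1
    have hiv' : (i : ℕ) < (v' : ℕ) := hp2 ▸ (par0_spec hd hvpos' hvn').1
    have hlow : eZ d (i : ℕ) ≤ eZ d (v : ℕ) := eZ_le_of_par0 hd hvpos hvn hp1
    have hlow' : eZ d (i : ℕ) ≤ eZ d (v' : ℕ) := eZ_le_of_par0 hd hvpos' hvn' hp2
    rcases lt_trichotomy (v : ℕ) (v' : ℕ) with h | h | h
    · have := eZ_lt_of_par0 hd hvpos' hvn' hp2 hiv h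
      omega
    · exact Fin.ext h
    · have := eZ_lt_of_par0 hd hvpos hvn hp1 hiv' h
      omega

lemma filter_ne_zero_card : ((Finset.univ : Finset (Fin (n + 1))).filter fun v => v ≠ 0).card = n := by
  classical
  have h : ((Finset.univ : Finset (Fin (n + 1))).filter fun v => v ≠ 0) =
      (Finset.univ.filter fun v : Fin (n + 1) => 1 ≤ (v : ℕ) ∧ (v : ℕ) < n + 1) := by
    ext v
    simp only [Finset.mem_filter, Finset.mem_univ, true_and]
    constructor
    · intro hv
      refine ⟨?_, v.isLt⟩
      rcases Nat.eq_zero_or_pos (v : ℕ) with h | h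
      · exact absurd (Fin.ext h) hv
      · omega
    · rintro ⟨h1, -⟩ h2
      rw [h2] at h1
      simp at h1
  rw [h, card_filter_val_Ico (le_refl (n + 1))]
  omega

lemma sum_outdeg (T : PlaneTree n) : ∑ i : Fin (n + 1), outdeg T i = n := by
  classical
  have h := Finset.card_eq_sum_card_fiberwise (f := T.par)
    (s := (Finset.univ : Finset (Fin (n + 1))).filter fun v => v ≠ 0)
    (t := Finset.univ) (fun v _ => Finset.mem_univ _)
  rw [filter_ne_zero_card] at h
  refine Eq.trans (Finset.sum_congr rfl fun i _ => ?_) h.symm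
  rw [outdeg, Finset.filter_filter]

lemma sum_dv (d : Fin n → ℕ) (hsum : ∑ j, d j = n) : ∑ i : Fin (n + 1), dv d i = n := by
  rw [Fin.sum_univ_castSucc]
  have h2 : dv d (Fin.last n) = 0 := dif_neg (by simp)
  have h1 : ∀ j : Fin n, dv d j.castSucc = d j := fun j => by
    rw [dv, dif_pos (by simpa using j.isLt)]
    congr 1
  rw [h2, add_zero, Finset.sum_congr rfl fun j _ => h1 j, hsum]

lemma outdeg_mkTree {d : Fin n → ℕ} (hd : HLuk d) (hsum : ∑ j, d j = n) (i : Fin (n + 1)) :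
    outdeg (mkTree d hd) i = dv d i := by
  have hle : ∀ i ∈ (Finset.univ : Finset (Fin (n + 1))), outdeg (mkTree d hd) i ≤ dv d i :=
    fun i _ => outdeg_mkTree_le hd i
  have hsums : ∑ i : Fin (n + 1), outdeg (mkTree d hd) i = ∑ i : Fin (n + 1), dv d i := by
    rw [sum_outdeg, sum_dv d hsum]
  exact (Finset.sum_eq_sum_iff_of_le hle).1 hsums i (Finset.mem_univ i)

/-! ### trees satisfy the Łukasiewicz condition -/

lemma dv_castSucc (d : Fin n → ℕ) (j : Fin n) : dv d j.castSucc = d j := by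
  rw [dv, dif_pos (by simpa using j.isLt)]
  congr 1

lemma outdeg_mkTree_castSucc {d : Fin n → ℕ} (hd : HLuk d) (hsum : ∑ j, d j = n) (j : Fin n) :
    outdeg (mkTree d hd) j.castSucc = d j := by
  rw [outdeg_mkTree hd hsum, dv_castSucc]

lemma psum_castSucc (g : Fin (n + 1) → ℕ) {m : ℕ} (hm : m ≤ n) :
    psum (fun b : Fin n => g b.castSucc) m
      = ∑ i ∈ Finset.univ.filter (fun i : Fin (n + 1) => (i : ℕ) < m), g i := by
  rw [psum]
  refine Finset.sum_bij (fun b _ => b.castSucc) ?_ ?_ ?_ ?_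
  · intro b hb
    simp only [Finset.mem_filter, Finset.mem_univ, true_and] at hb ⊢
    simpa using hb
  · intro a ha b hb hab
    exact Fin.castSucc_inj.1 hab
  · intro i hi
    simp only [Finset.mem_filter, Finset.mem_univ, true_and] at hi
    refine ⟨⟨(i : ℕ), lt_of_lt_of_le hi hm⟩, ?_, ?_⟩
    · simp only [Finset.mem_filter, Finset.mem_univ, true_and]
      exact hi
    · apply Fin.ext
      simp
  · intro b hb
    rfl

lemma HLuk_tree (T : PlaneTree n) : HLuk (fun j : Fin n => outdeg T j.castSucc) := by
  intro j
  have hm : (j : ℕ) + 1 ≤ n := j.isLt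
  rw [psum_castSucc _ hm]
  have hB : (Bset T 0 ((j : ℕ) + 1)).card
      = ∑ i ∈ Finset.univ.filter (fun i : Fin (n + 1) => (i : ℕ) < (j : ℕ) + 1), outdeg T i := by
    rw [Bset_card_eq]
    congr 1
    ext i
    simp
  rw [← hB]
  have hsub : (Finset.univ.filter fun t : Fin (n + 1) =>
      1 ≤ (t : ℕ) ∧ (t : ℕ) < (j : ℕ) + 2) ⊆ Bset T 0 ((j : ℕ) + 1) := by
    intro t ht
    simp only [Finset.mem_filter, Finset.mem_univ, true_and] at ht
    have ht0 : t ≠ 0 := by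
      intro h
      rw [h] at ht
      simp only [Fin.val_zero] at ht
      omega
    have := Fin.lt_def.1 (T.par_lt t ht0)
    simp only [Bset, Finset.mem_filter, Finset.mem_univ, true_and]
    exact ⟨ht0, Nat.zero_le _, by omega⟩
  have hcard : (Finset.univ.filter fun t : Fin (n + 1) =>
      1 ≤ (t : ℕ) ∧ (t : ℕ) < (j : ℕ) + 2).card = (j : ℕ) + 1 := by
    rw [card_filter_val_Ico (by omega)]
    omega
  calc (j : ℕ) + 1 = _ := hcard.symm
  _ ≤ (Bset T 0 ((j : ℕ) + 1)).card := Finset.card_le_card hsub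

lemma outdeg_last (hn : 1 ≤ n) (T : PlaneTree n) : outdeg T (Fin.last n) = 0 := by
  rw [outdeg, Finset.card_eq_zero, Finset.filter_eq_empty_iff]
  rintro v - ⟨hv0, hp⟩
  have h1 := Fin.lt_def.1 (T.par_lt v hv0)
  have h2 : ((T.par v : Fin (n + 1)) : ℕ) = n := by rw [hp]; exact Fin.val_last n
  have := v.isLt
  omega

lemma sum_outdeg_castSucc (hn : 1 ≤ n) (T : PlaneTree n) :
    ∑ j : Fin n, outdeg T j.castSucc = n := by
  have h := sum_outdeg T
  rwa [Fin.sum_univ_castSucc, outdeg_last hn, add_zero] at h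

lemma eq_of_outdeg_castSucc_eq (hn : 1 ≤ n) {T T' : PlaneTree n}
    (h : ∀ j : Fin n, outdeg T j.castSucc = outdeg T' j.castSucc) : T = T' := by
  apply eq_of_outdeg_eq
  intro i
  by_cases hi : (i : ℕ) < n
  · have : i = (⟨(i : ℕ), hi⟩ : Fin n).castSucc := Fin.ext (by simp)
    rw [this]
    exact h _
  · have : i = Fin.last n := Fin.ext (by have := i.isLt; simp only [Fin.val_last]; omega)
    rw [this, outdeg_last hn, outdeg_last hn]

/-- the trivial tree -/
def triv (n : ℕ) : PlaneTree n where
  par := fun _ => 0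
  par_zero := rfl
  par_lt := fun v hv => Fin.pos_of_ne_zero hv
  plane := by
    rintro i j k h0 hij hjk ⟨m, hm⟩
    exfalso
    cases m with
    | zero =>
      simp only [Function.iterate_zero_apply] at hm
      rw [hm] at hjk
      exact absurd (lt_trans hij hjk) (lt_irrefl i)
    | succ m =>
      rw [Function.iterate_succ_apply'] at hm
      exact absurd hm.symm (ne_of_gt h0)

noncomputable instance : Fintype (PlaneTree n) :=
  Fintype.ofInjective PlaneTree.par (fun _ _ h => planeTree_ext h)

instance (d : Fin n → ℕ) : Decidable (HLuk d) := by
  unfold HLuk; infer_instance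

noncomputable instance : DecidableEq (PlaneTree n) := Classical.decEq _

/-- total version of the tree construction -/
noncomputable def psi (ℓ : Fin n → Fin n) : PlaneTree n :=
  if h : HLuk (cnt ℓ) then mkTree (cnt ℓ) h else triv n

lemma filter_psi_eq (hn : 1 ≤ n) (T : PlaneTree n) :
    (Lfin n).filter (fun ℓ => psi ℓ = T) = Cd (fun j => outdeg T j.castSucc) := by
  classical
  ext ℓ
  simp only [Finset.mem_filter, Lfin, Finset.mem_univ, true_and, Cd]
  constructor
  · rintro ⟨hmem, hpsi⟩
    have hdℓ : HLuk (cnt ℓ) := fun j => by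
      rw [← card_le_filter_eq_psum]
      exact hmem j
    intro j
    rw [← hpsi, psi, dif_pos hdℓ, outdeg_mkTree_castSucc hdℓ (sum_cnt ℓ)]
  · intro hC
    have hfun : cnt ℓ = fun j => outdeg T j.castSucc := funext hC
    have hdT : HLuk (fun j : Fin n => outdeg T j.castSucc) := HLuk_tree T
    have hdℓ : HLuk (cnt ℓ) := by rw [hfun]; exact hdT
    constructor
    · intro j
      rw [card_le_filter_eq_psum, hfun]
      exact hdT j
    · rw [psi, dif_pos hdℓ]
      apply eq_of_outdeg_castSucc_eq hn
      intro j
      rw [outdeg_mkTree_castSucc hdℓ (sum_cnt ℓ), hC j]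

lemma sum_Cd (x : ℕ → ℕ) (d : Fin n → ℕ) :
    ∑ ℓ ∈ Cd d, ∏ i, x (ℓ i) = (Cd d).card * ∏ j : Fin n, x (j : ℕ) ^ d j := by
  rw [Finset.sum_congr rfl (fun ℓ hℓ => ?_), Finset.sum_const, smul_eq_mul]
  rw [prod_pow_cnt]
  refine Finset.prod_congr rfl fun j _ => ?_
  have : ∀ j', cnt ℓ j' = d j' := by
    have := Finset.mem_filter.1 hℓ
    exact this.2
  rw [this j]

end VPFaux

/-- The number of `x`-parking functions equals
`n! ∑_{T ∈ RPT(n+1)} ∏_{i=1}^{n} x_i^{outdeg_T(i−1)} / (outdeg_T(i−1)!)`,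
as rational numbers. -/
theorem stmt4 (n : ℕ) (hn : 1 ≤ n) (x : ℕ → ℕ) :
    (Set.ncard {α : Fin n → ℕ | IsVPF n x α} : ℚ) =
      (Nat.factorial n : ℚ) *
        ∑ᶠ T : PlaneTree n, ∏ i : Fin n,
          (x (i : ℕ) : ℚ) ^ outdeg T i.castSucc /
            (Nat.factorial (outdeg T i.castSucc) : ℚ) := by
  classical
  have hset : {α : Fin n → ℕ | IsVPF n x α} = {α | VPFaux.IsVPF' n x α} := rfl
  rw [hset, VPFaux.ncard_VPF, finsum_eq_sum_of_fintype, Finset.mul_sum]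
  have hper : ∀ T : PlaneTree n,
      (n.factorial : ℚ) * ∏ i : Fin n, (x (i : ℕ) : ℚ) ^ outdeg T i.castSucc /
          (Nat.factorial (outdeg T i.castSucc) : ℚ)
        = ((∑ ℓ ∈ VPFaux.Cd (fun j => outdeg T j.castSucc), ∏ i, x (ℓ i) : ℕ) : ℚ) := by
    intro T
    set d := fun j : Fin n => outdeg T j.castSucc with hd
    have hsum : ∑ j, d j = n := VPFaux.sum_outdeg_castSucc hn T
    have hcard := VPFaux.card_Cd_mul d hsum
    have hcast : ((VPFaux.Cd d).card : ℚ) * (∏ j, ((d j).factorial : ℚ))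
        = (n.factorial : ℚ) := by
      exact_mod_cast hcard
    have hfacne : (∏ j : Fin n, ((d j).factorial : ℚ)) ≠ 0 := by
      refine Finset.prod_ne_zero_iff.2 fun j _ => ?_
      exact_mod_cast (Nat.factorial_pos (d j)).ne'
    rw [VPFaux.sum_Cd]
    push_cast
    rw [Finset.prod_div_distrib, ← mul_div_assoc, div_eq_iff hfacne, ← hcast]
    ring
  calc ((∑ ℓ ∈ VPFaux.Lfin n, ∏ i, x (ℓ i) : ℕ) : ℚ)
      = ((∑ T : PlaneTree n, ∑ ℓ ∈ VPFaux.Cd (fun j => outdeg T j.castSucc),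
          ∏ i, x (ℓ i) : ℕ) : ℚ) := by
        congr 1
        rw [← Finset.sum_fiberwise_of_maps_to (g := VPFaux.psi)
          (fun ℓ _ => Finset.mem_univ _) (fun ℓ => ∏ i, x (ℓ i))]
        exact Finset.sum_congr rfl fun T _ => by rw [VPFaux.filter_psi_eq hn T]
    _ = ∑ T : PlaneTree n, ((∑ ℓ ∈ VPFaux.Cd (fun j => outdeg T j.castSucc),
          ∏ i, x (ℓ i) : ℕ) : ℚ) := by push_cast; rfl
    _ = _ := Finset.sum_congr rfl fun T _ => (hper T).symm
end
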